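/- Let μ be a Borel probability measure on [0,1]^d with cumulative distribution function H, and let w = (w₁,…,w_d) ∈ (0,1]^d satisfy w₁ + ⋯ + w_d = 1. Then ∫_{[0,1]^d} ν_w(u) dμ(u) = (1/d) Σ_{i=1}^d ∫₀¹ H(1,…,1,x^{wᵢ},1,…,1) dx − ∫₀¹ H(x^{w₁},…,x^{w_d}) dx, where in the i-th summand x^{wᵢ} appears in the i-th coordinate and all other coordinates equal 1. -/

import Mathlib

open MeasureTheory Finset

/-- The multivariate `w`-madogram integrand
`ν_w(u) = max_i uᵢ^(1/wᵢ) − (1/d) Σᵢ uᵢ^(1/wᵢ)`. -/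
noncomputable def nuW (d : ℕ) (hd : 0 < d) (w u : Fin d → ℝ) : ℝ :=
  (Finset.univ.sup' (Finset.univ_nonempty_iff.mpr (Fin.pos_iff_nonempty.mp hd))
      fun i => u i ^ (1 / w i)) -
    (1 / (d : ℝ)) * ∑ i, u i ^ (1 / w i)

/-- Cumulative distribution function of a measure on `[0,1]^d ⊆ ℝ^d`. -/
noncomputable def cdf {d : ℕ} (μ : Measure (Fin d → ℝ)) (u : Fin d → ℝ) : ℝ :=
  (μ {v | ∀ i, v i ≤ u i}).toReal

/-- Auxiliary two-variable integrand. -/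
noncomputable def auxF (d : ℕ) (w : Fin d → ℝ) (u : Fin d → ℝ) (x : ℝ) : ℝ :=
  (1 / (d : ℝ)) * ∑ i, (if u i ^ (1 / w i) ≤ x then (1:ℝ) else 0) -
    (if ∀ i, u i ^ (1 / w i) ≤ x then (1:ℝ) else 0)

lemma aux_indic_integral {a : ℝ} (h0 : 0 ≤ a) (h1 : a ≤ 1) :
    ∫ x in Set.Ioc (0:ℝ) 1, (if a ≤ x then (1:ℝ) else 0) = 1 - a := by
  have h : (fun x : ℝ => if a ≤ x then (1:ℝ) else 0) = (Set.Ici a).indicator 1 := by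
    funext x; simp [Set.indicator_apply]
  rw [h, MeasureTheory.integral_indicator_one measurableSet_Ici, measureReal_def,
    Measure.restrict_apply measurableSet_Ici]
  have hle : volume (Set.Ici a ∩ Set.Ioc 0 1) = ENNReal.ofReal (1 - a) := by
    apply le_antisymm
    · calc volume (Set.Ici a ∩ Set.Ioc 0 1) ≤ volume (Set.Icc a 1) := by
            apply measure_mono; rintro x ⟨hx1, _, hx3⟩; exact ⟨hx1, hx3⟩
      _ = ENNReal.ofReal (1 - a) := Real.volume_Icc
    · calc ENNReal.ofReal (1 - a) = volume (Set.Ioc a 1) := Real.volume_Ioc.symm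
      _ ≤ volume (Set.Ici a ∩ Set.Ioc 0 1) := by
            apply measure_mono; rintro x ⟨hx1, hx2⟩
            exact ⟨le_of_lt hx1, lt_of_le_of_lt h0 hx1, hx2⟩
  rw [hle, ENNReal.toReal_ofReal (by linarith)]

lemma aux_indic_integrable (a : ℝ) :
    Integrable (fun x => if a ≤ x then (1:ℝ) else 0)
      (volume.restrict (Set.Ioc (0:ℝ) 1)) := by
  have h : (fun x : ℝ => if a ≤ x then (1:ℝ) else 0) = (Set.Ici a).indicator 1 := by
    funext x; simp [Set.indicator_apply]
  rw [h]
  have hc : IntegrableOn (fun _ : ℝ => (1:ℝ)) (Set.Ioc (0:ℝ) 1) volume :=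
    (integrableOn_const_iff).mpr (Or.inr (by simp [Real.volume_Ioc]))
  exact hc.indicator measurableSet_Ici

lemma aux_pointwise (d : ℕ) (hd0 : 0 < d) (w u : Fin d → ℝ)
    (hw : ∀ i, 0 < w i) (hu : ∀ i, u i ∈ Set.Icc (0:ℝ) 1) :
    nuW d hd0 w u = ∫ x in Set.Ioc (0:ℝ) 1, auxF d w u x := by
  have hne : (univ : Finset (Fin d)).Nonempty := ⟨⟨0, hd0⟩, mem_univ _⟩
  have hdne : (d : ℝ) ≠ 0 := Nat.cast_ne_zero.mpr (by omega)
  set f : Fin d → ℝ := fun i => u i ^ (1 / w i) with hf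
  have hf01 : ∀ i, f i ∈ Set.Icc (0:ℝ) 1 := fun i =>
    ⟨Real.rpow_nonneg (hu i).1 _,
     Real.rpow_le_one (hu i).1 (hu i).2 (le_of_lt (div_pos one_pos (hw i)))⟩
  set M : ℝ := univ.sup' hne f with hM
  have hM1 : M ≤ 1 := Finset.sup'_le _ _ fun i _ => (hf01 i).2
  have hM0 : 0 ≤ M := le_trans (hf01 ⟨0, hd0⟩).1 (Finset.le_sup' f (mem_univ _))
  have h1 : ∀ x : ℝ, auxF d w u x =
      (1 / (d:ℝ)) * ∑ i, (if f i ≤ x then (1:ℝ) else 0) -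
        (if M ≤ x then (1:ℝ) else 0) := by
    intro x
    unfold auxF
    congr 1
    exact if_congr ⟨fun h => Finset.sup'_le _ _ fun i _ => h i,
      fun h i => (Finset.le_sup' f (mem_univ i)).trans h⟩ rfl rfl
  simp only [h1]
  rw [integral_sub (((integrable_finset_sum _ fun i _ =>
        aux_indic_integrable (f i)).const_mul _)) (aux_indic_integrable M),
    MeasureTheory.integral_const_mul,
    integral_finset_sum _ (fun i _ => aux_indic_integrable (f i)),
    aux_indic_integral hM0 hM1]
  have hsum : ∑ i, ∫ x in Set.Ioc (0:ℝ) 1, (if f i ≤ x then (1:ℝ) else 0) =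
      ∑ i, (1 - f i) :=
    Finset.sum_congr rfl fun i _ => aux_indic_integral (hf01 i).1 (hf01 i).2
  rw [hsum, Finset.sum_sub_distrib, Finset.sum_const, card_univ, Fintype.card_fin]
  show M - (1 / (d:ℝ)) * ∑ i, f i =
    (1 / (d:ℝ)) * ((d : ℕ) • (1:ℝ) - ∑ i, f i) - (1 - M)
  rw [nsmul_eq_mul, mul_one, mul_sub]
  rw [show (1 / (d:ℝ)) * (d:ℝ) = 1 by field_simp]
  ring

lemma aux_measurable (d : ℕ) (w : Fin d → ℝ) (hw : ∀ i, 0 < w i) :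
    Measurable (Function.uncurry (auxF d w)) := by
  have hm : ∀ i : Fin d, Measurable (fun p : (Fin d → ℝ) × ℝ => p.1 i ^ (1 / w i)) :=
    fun i => (Real.continuous_rpow_const
      (le_of_lt (div_pos one_pos (hw i)))).measurable.comp
      ((measurable_pi_apply i).comp measurable_fst)
  have hs : ∀ i : Fin d, MeasurableSet {p : (Fin d → ℝ) × ℝ | p.1 i ^ (1 / w i) ≤ p.2} :=
    fun i => measurableSet_le (hm i) measurable_snd
  unfold Function.uncurry auxF
  apply Measurable.sub
  · apply Measurable.const_mul
    apply Finset.measurable_sum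
    intro i _
    exact Measurable.ite (hs i) measurable_const measurable_const
  · refine Measurable.ite ?_ measurable_const measurable_const
    have : {p : (Fin d → ℝ) × ℝ | ∀ i, p.1 i ^ (1 / w i) ≤ p.2} =
        ⋂ i, {p : (Fin d → ℝ) × ℝ | p.1 i ^ (1 / w i) ≤ p.2} := by
      ext p; simp
    rw [this]
    exact MeasurableSet.iInter hs

lemma aux_inner_integral (d : ℕ) (w : Fin d → ℝ) (hw : ∀ i, 0 < w i)
    (μ : Measure (Fin d → ℝ)) [IsProbabilityMeasure μ] (x : ℝ) :
    ∫ u, auxF d w u x ∂μ =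
      (1 / (d:ℝ)) * ∑ i, (μ {u : Fin d → ℝ | u i ^ (1 / w i) ≤ x}).toReal -
        (μ {u : Fin d → ℝ | ∀ i, u i ^ (1 / w i) ≤ x}).toReal := by
  have hm : ∀ i : Fin d, Measurable (fun u : Fin d → ℝ => u i ^ (1 / w i)) :=
    fun i => (Real.continuous_rpow_const
      (le_of_lt (div_pos one_pos (hw i)))).measurable.comp (measurable_pi_apply i)
  have hs : ∀ i : Fin d, MeasurableSet {u : Fin d → ℝ | u i ^ (1 / w i) ≤ x} :=
    fun i => measurableSet_le (hm i) measurable_const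
  have hall : MeasurableSet {u : Fin d → ℝ | ∀ i, u i ^ (1 / w i) ≤ x} := by
    have : {u : Fin d → ℝ | ∀ i, u i ^ (1 / w i) ≤ x} =
        ⋂ i, {u : Fin d → ℝ | u i ^ (1 / w i) ≤ x} := by ext u; simp
    rw [this]; exact MeasurableSet.iInter hs
  have key : ∀ (s : Set (Fin d → ℝ)) (c : (Fin d → ℝ) → Prop), MeasurableSet s →
      (∀ u, c u ↔ u ∈ s) → ∀ [DecidablePred c],
      (Integrable (fun u => if c u then (1:ℝ) else 0) μ ∧
        ∫ u, (if c u then (1:ℝ) else 0) ∂μ = (μ s).toReal) := by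
    intro s c hsm hc _
    have heq : (fun u => if c u then (1:ℝ) else 0) = s.indicator 1 := by
      funext u
      by_cases h : c u
      · rw [if_pos h, Set.indicator_of_mem ((hc u).mp h)]; rfl
      · rw [if_neg h, Set.indicator_of_notMem (fun hm => h ((hc u).mpr hm))]
    rw [heq]
    exact ⟨(integrable_const (1:ℝ)).indicator hsm,
      MeasureTheory.integral_indicator_one hsm⟩
  have k1 := fun i : Fin d => key _ _ (hs i)
    (fun u => Iff.rfl : ∀ u : Fin d → ℝ, u i ^ (1 / w i) ≤ x ↔ u ∈ {u | u i ^ (1 / w i) ≤ x})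
  have k2 := key _ _ hall
    (fun u => Iff.rfl : ∀ u : Fin d → ℝ, (∀ i, u i ^ (1 / w i) ≤ x) ↔
      u ∈ {u | ∀ i, u i ^ (1 / w i) ≤ x})
  unfold auxF
  rw [integral_sub (((integrable_finset_sum _ fun i _ => (k1 i).1).const_mul _)) k2.1,
    MeasureTheory.integral_const_mul,
    integral_finset_sum _ (fun i _ => (k1 i).1), k2.2]
  congr 2
  exact Finset.sum_congr rfl fun i _ => (k1 i).2

theorem madogram_integral_formula (d : ℕ) (hd : 2 ≤ d)
    (μ : Measure (Fin d → ℝ)) [IsProbabilityMeasure μ]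
    (hμ : μ (Set.univ.pi fun _ : Fin d => Set.Icc (0:ℝ) 1)ᶜ = 0)
    (w : Fin d → ℝ) (hw : ∀ i, 0 < w i ∧ w i ≤ 1) (hwsum : ∑ i, w i = 1) :
    ∫ u, nuW d (by omega) w u ∂μ =
      (1 / (d : ℝ)) *
          (∑ i : Fin d, ∫ x in (0:ℝ)..1, cdf μ (Function.update (fun _ => (1:ℝ)) i (x ^ w i))) -
        ∫ x in (0:ℝ)..1, cdf μ fun i => x ^ w i := by
  have hd0 : 0 < d := by omega
  have hwpos : ∀ i, 0 < w i := fun i => (hw i).1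
  set ν : Measure ℝ := volume.restrict (Set.Ioc (0:ℝ) 1) with hν
  have hνfin : IsFiniteMeasure ν := by
    constructor
    rw [hν, Measure.restrict_apply_univ]
    simp [Real.volume_Ioc]
  have haeS : ∀ᵐ u ∂μ, ∀ i, u i ∈ Set.Icc (0:ℝ) 1 := by
    rw [Filter.eventually_iff, mem_ae_iff]
    rw [show {u : Fin d → ℝ | ∀ i, u i ∈ Set.Icc (0:ℝ) 1}ᶜ =
        (Set.univ.pi fun _ : Fin d => Set.Icc (0:ℝ) 1)ᶜ from by
      congr 1
      ext u
      simp only [Set.mem_setOf_eq, Set.mem_pi, Set.mem_univ, forall_true_left, true_implies]]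
    exact hμ
  -- integrability on the product for Fubini
  have hFint : Integrable (Function.uncurry (auxF d w)) (μ.prod ν) := by
    refine ⟨(aux_measurable d w hwpos).aestronglyMeasurable,
      HasFiniteIntegral.of_bounded (C := 2) (ae_of_all _ fun p => ?_)⟩
    unfold Function.uncurry auxF
    rw [Real.norm_eq_abs]
    have h01 : ∀ i : Fin d, (0:ℝ) ≤ (if p.1 i ^ (1 / w i) ≤ p.2 then (1:ℝ) else 0) ∧
        (if p.1 i ^ (1 / w i) ≤ p.2 then (1:ℝ) else 0) ≤ 1 := by
      intro i; split <;> norm_num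
    have hA0 : (0:ℝ) ≤ ∑ i, (if p.1 i ^ (1 / w i) ≤ p.2 then (1:ℝ) else 0) :=
      Finset.sum_nonneg fun i _ => (h01 i).1
    have hA1 : ∑ i, (if p.1 i ^ (1 / w i) ≤ p.2 then (1:ℝ) else 0) ≤ (d : ℝ) := by
      calc ∑ i, (if p.1 i ^ (1 / w i) ≤ p.2 then (1:ℝ) else 0) ≤ ∑ _i : Fin d, (1:ℝ) :=
            Finset.sum_le_sum fun i _ => (h01 i).2
        _ = (d : ℝ) := by simp
    have hdpos : (0:ℝ) < (d:ℝ) := by exact_mod_cast hd0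
    have hX0 : (0:ℝ) ≤ (1 / (d:ℝ)) * ∑ i, (if p.1 i ^ (1 / w i) ≤ p.2 then (1:ℝ) else 0) :=
      mul_nonneg (by positivity) hA0
    have hX1 : (1 / (d:ℝ)) * ∑ i, (if p.1 i ^ (1 / w i) ≤ p.2 then (1:ℝ) else 0) ≤ 1 := by
      rw [one_div, inv_mul_le_iff₀ hdpos, mul_one]
      exact hA1
    have hB : (0:ℝ) ≤ (if ∀ i, p.1 i ^ (1 / w i) ≤ p.2 then (1:ℝ) else 0) ∧
        (if ∀ i, p.1 i ^ (1 / w i) ≤ p.2 then (1:ℝ) else 0) ≤ 1 := by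
      split <;> norm_num
    rw [abs_sub_le_iff]
    constructor <;> linarith [hB.1, hB.2]
  -- the cdf integrands and their integrability
  have hcdfmono : ∀ (c c' : Fin d → ℝ), (∀ j, c j ≤ c' j) → cdf μ c ≤ cdf μ c' := by
    intro c c' h
    exact ENNReal.toReal_mono (measure_ne_top μ _)
      (measure_mono fun v hv j => (hv j).trans (h j))
  have hint_i : ∀ i : Fin d, IntegrableOn
      (fun x : ℝ => cdf μ (Function.update (fun _ => (1:ℝ)) i (x ^ w i)))
      (Set.Ioc (0:ℝ) 1) volume := by
    intro i
    have hmono : MonotoneOn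
        (fun x : ℝ => cdf μ (Function.update (fun _ => (1:ℝ)) i (x ^ w i)))
        (Set.Icc (0:ℝ) 1) := by
      intro x hx y _ hxy
      apply hcdfmono
      intro j
      rw [Function.update_apply, Function.update_apply]
      by_cases hj : j = i
      · simp only [hj, if_pos rfl]
        exact Real.rpow_le_rpow hx.1 hxy (hwpos i).le
      · simp [hj]
    exact (hmono.integrableOn_isCompact isCompact_Icc).mono_set Set.Ioc_subset_Icc_self
  have hint_j : IntegrableOn (fun x : ℝ => cdf μ fun i => x ^ w i)
      (Set.Ioc (0:ℝ) 1) volume := by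
    have hmono : MonotoneOn (fun x : ℝ => cdf μ fun i => x ^ w i) (Set.Icc (0:ℝ) 1) := by
      intro x hx y _ hxy
      exact hcdfmono _ _ fun j => Real.rpow_le_rpow hx.1 hxy (hwpos j).le
    exact (hmono.integrableOn_isCompact isCompact_Icc).mono_set Set.Ioc_subset_Icc_self
  -- main computation
  calc ∫ u, nuW d (by omega) w u ∂μ
      = ∫ u, (∫ x, auxF d w u x ∂ν) ∂μ :=
        integral_congr_ae (haeS.mono fun u hu => aux_pointwise d hd0 w u hwpos hu)
    _ = ∫ x, (∫ u, auxF d w u x ∂μ) ∂ν := integral_integral_swap hFint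
    _ = ∫ x in Set.Ioc (0:ℝ) 1,
          ((1 / (d:ℝ)) * ∑ i, cdf μ (Function.update (fun _ => (1:ℝ)) i (x ^ w i)) -
            cdf μ fun i => x ^ w i) := by
        apply setIntegral_congr_fun measurableSet_Ioc
        intro x hx
        show ∫ u, auxF d w u x ∂μ = _
        rw [aux_inner_integral d w hwpos μ x]
        have hx0 : (0:ℝ) ≤ x := hx.1.le
        have hmeq1 : ∀ i : Fin d, μ {u : Fin d → ℝ | u i ^ (1 / w i) ≤ x} =
            μ {v : Fin d → ℝ | ∀ j, v j ≤ Function.update (fun _ => (1:ℝ)) i (x ^ w i) j} := by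
          intro i
          apply measure_congr
          rw [Filter.eventuallyEq_set]
          filter_upwards [haeS] with u hu
          constructor
          · intro h j
            rw [Function.update_apply]
            by_cases hj : j = i
            · subst hj
              simp only [if_pos rfl]
              rw [one_div] at h
              exact (Real.rpow_inv_le_iff_of_pos (hu j).1 hx0 (hwpos j)).mp h
            · simp only [if_neg hj]
              exact (hu j).2
          · intro h
            have := h i
            rw [Function.update_self] at this
            rw [one_div]
            exact (Real.rpow_inv_le_iff_of_pos (hu i).1 hx0 (hwpos i)).mpr this
        have hmeq2 : μ {u : Fin d → ℝ | ∀ i, u i ^ (1 / w i) ≤ x} =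
            μ {v : Fin d → ℝ | ∀ i, v i ≤ x ^ w i} := by
          apply measure_congr
          rw [Filter.eventuallyEq_set]
          filter_upwards [haeS] with u hu
          constructor
          · intro h i
            have := h i
            rw [one_div] at this
            exact (Real.rpow_inv_le_iff_of_pos (hu i).1 hx0 (hwpos i)).mp this
          · intro h i
            rw [one_div]
            exact (Real.rpow_inv_le_iff_of_pos (hu i).1 hx0 (hwpos i)).mpr (h i)
        unfold cdf
        rw [hmeq2]
        congr 2
        exact Finset.sum_congr rfl fun i _ => by rw [hmeq1 i]
    _ = (1 / (d : ℝ)) *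
          (∑ i : Fin d, ∫ x in (0:ℝ)..1, cdf μ (Function.update (fun _ => (1:ℝ)) i (x ^ w i))) -
        ∫ x in (0:ℝ)..1, cdf μ fun i => x ^ w i := by
        rw [integral_sub ((integrable_finset_sum _ fun i _ => hint_i i).const_mul _) hint_j,
          MeasureTheory.integral_const_mul,
          integral_finset_sum _ (fun i _ => hint_i i)]
        simp only [intervalIntegral.integral_of_le (zero_le_one (α := ℝ))]
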